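/- arXiv:1604.01615 — 2 statements merged into one kernel-verified Lean document; each statement's English description precedes it below -/
import Mathlib

section
/- Let R be a commutative ring and let x, y ∈ R satisfy x² = 0. Then (1 + x·y)·(1 − x·y) = 1, and in the ring of 2×2 matrices over R the commutator identity !![1, x; 0, 1] · !![1, 0; y, 1] · !![1, −x; 0, 1] · !![1, 0; −y, 1] = !![1 + x·y, 0; 0, 1 − x·y] · !![1, 0; x·y², 1] holds. -/
theorem stmt_1 {R : Type*} [CommRing R] (x y : R) (hx : x ^ 2 = 0) :
    (1 + x * y) * (1 - x * y) = 1 ∧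
      (!![1, x; 0, 1] : Matrix (Fin 2) (Fin 2) R) * !![1, 0; y, 1] *
          !![1, -x; 0, 1] * !![1, 0; -y, 1] =
        !![1 + x * y, 0; 0, 1 - x * y] * !![1, 0; x * y ^ 2, 1] := by
  have h2 : x * x = 0 := by rw [← sq]; exact hx
  refine ⟨by linear_combination -y^2*hx, ?_⟩
  ext i j
  fin_cases i <;> fin_cases j <;>
    simp [Matrix.mul_apply, Fin.sum_univ_succ] <;> ring_nf <;>
    simp [hx]
end

section
/- Let R be a nontrivial commutative Artinian local ring, n a natural number, and d : Fin n → R. Then the following are equivalent: (i) every invertible n×n matrix g over R (element of GL_n(R)) whose underlying matrix commutes with diagonal(d) is a diagonal matrix; (ii) d i − d j is a unit of R for every pair i ≠ j in Fin n. -/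
theorem stmt_3 {R : Type*} [CommRing R] [IsArtinianRing R] [IsLocalRing R]
    {n : ℕ} (d : Fin n → R) :
    (∀ g : Matrix.GeneralLinearGroup (Fin n) R,
        (g : Matrix (Fin n) (Fin n) R) * Matrix.diagonal d =
          Matrix.diagonal d * (g : Matrix (Fin n) (Fin n) R) →
        (g : Matrix (Fin n) (Fin n) R).IsDiag) ↔
      (∀ i j : Fin n, i ≠ j → IsUnit (d i - d j)) := by
  constructor
  · intro H i j hij
    by_contra hu
    have hmem : d i - d j ∈ IsLocalRing.maximalIdeal R :=
      (IsLocalRing.mem_maximalIdeal _).mpr hu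
    have hnil : IsNilpotent (d i - d j) := by
      obtain ⟨k, hk⟩ := IsArtinianRing.isNilpotent_jacobson_bot (R := R)
      refine ⟨k, ?_⟩
      have : (d i - d j) ^ k ∈ (Ideal.jacobson (⊥ : Ideal R)) ^ k := by
        rw [IsLocalRing.jacobson_eq_maximalIdeal ⊥ bot_ne_top]
        exact Ideal.pow_mem_pow hmem k
      rw [hk] at this
      simpa using this
    obtain ⟨k, hk⟩ := hnil
    have h1 : ∃ m, (d i - d j) ^ m = 0 := ⟨k, hk⟩
    classical
    let m := Nat.find h1
    have hm : (d i - d j) ^ m = 0 := Nat.find_spec h1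
    have hmpos : 0 < m := by
      rcases Nat.eq_zero_or_pos m with h | h
      · exfalso; rw [h, pow_zero] at hm; exact one_ne_zero hm
      · exact h
    set t := (d i - d j) ^ (m - 1) with ht
    have htne : t ≠ 0 := Nat.find_min h1 (Nat.sub_lt hmpos one_pos)
    have htx : t * (d i - d j) = 0 := by
      rw [ht, ← pow_succ, Nat.sub_add_cancel hmpos, hm]
    set E : Matrix (Fin n) (Fin n) R := Matrix.single i j t with hE
    have hE2 : E * E = 0 := by simp [hE, Ne.symm hij]
    have hinv : (1 + E) * (1 - E) = 1 := by
      have h : (1 + E) * (1 - E) = 1 - E * E := by noncomm_ring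
      rw [h, hE2, sub_zero]
    have hinv' : (1 - E) * (1 + E) = 1 := by
      have h : (1 - E) * (1 + E) = 1 - E * E := by noncomm_ring
      rw [h, hE2, sub_zero]
    let g : Matrix.GeneralLinearGroup (Fin n) R := ⟨1 + E, 1 - E, hinv, hinv'⟩
    have hcomm : (g : Matrix (Fin n) (Fin n) R) * Matrix.diagonal d =
        Matrix.diagonal d * (g : Matrix (Fin n) (Fin n) R) := by
      show (1 + E) * Matrix.diagonal d = Matrix.diagonal d * (1 + E)
      have hED : E * Matrix.diagonal d = Matrix.diagonal d * E := by
        ext a b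
        rw [Matrix.mul_diagonal, Matrix.diagonal_mul, hE]
        simp only [Matrix.single, Matrix.of_apply]
        by_cases ha : i = a <;> by_cases hb : j = b <;> simp [ha, hb]
        rw [← ha, ← hb]
        linear_combination -htx
      rw [mul_add, add_mul, hED, Matrix.one_mul, Matrix.mul_one]
    have := H g hcomm hij
    have hone : (1 : Matrix (Fin n) (Fin n) R) i j = 0 := Matrix.one_apply_ne hij
    have hgij : (g : Matrix (Fin n) (Fin n) R) i j = t := by
      show ((1 : Matrix (Fin n) (Fin n) R) + E) i j = t
      simp [hone, hE, Matrix.single, Matrix.add_apply]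
    have h0 : (g : Matrix (Fin n) (Fin n) R) i j = 0 := this
    rw [hgij] at h0
    exact htne h0
  · intro H g hcomm i j hij
    have := congrFun (congrFun hcomm i) j
    rw [Matrix.mul_diagonal, Matrix.diagonal_mul] at this
    have hu : IsUnit (d j - d i) := H j i hij.symm
    have h0 : (g : Matrix (Fin n) (Fin n) R) i j * (d j - d i) = 0 := by
      linear_combination this
    exact hu.mul_left_eq_zero.mp (by linear_combination h0)
end
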